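/- arXiv:2108.13544 — 3 statements merged into one kernel-verified Lean document; each statement's English description precedes it below -/
import Mathlib

section
/- Suppose each of n items (n a power of 2, n ≥ 2) has a nonnegative connection cost, and suppose that for every subset S of the items containing the maximum-cost items of any given size, the sum of the ⌈|S|/2⌉ smallest costs within S is at most C. Then the total sum of all n connection costs is at most (log₂ n + 1)·C. -/
/-- Items indexed `1, ..., n` with `n = 2^m`, costs sorted in non-increasing order.
For every `k`, the set of the `k` maximum-cost items is `{1, ..., k}`, and the
`⌈k/2⌉` smallest costs within it are `c_{k - ⌈k/2⌉ + 1}, ..., c_k`. -/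
theorem stmt_5 (m : ℕ) (hm : 1 ≤ m) (n : ℕ) (hn : n = 2 ^ m) (C : ℝ)
    (c : ℕ → ℝ) (hnonneg : ∀ i, 0 ≤ c i)
    (hsorted : ∀ i j, i ≤ j → c j ≤ c i)
    (hhalf : ∀ k ∈ Finset.Icc 1 n,
      ∑ i ∈ Finset.Icc (k - (k + 1) / 2 + 1) k, c i ≤ C) :
    ∑ i ∈ Finset.Icc 1 n, c i ≤ (Real.logb 2 n + 1) * C := by
  subst hn
  have key : ∀ m' : ℕ, m' ≤ m →
      ∑ i ∈ Finset.Icc 1 (2 ^ m'), c i ≤ (m' + 1 : ℝ) * C := by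
    intro m' h
    induction m' with
    | zero =>
        have h1 := hhalf 1 (by simp [Nat.one_le_two_pow])
        simpa using h1
    | succ k ih =>
        have hle : 2 ^ (k + 1) ≤ 2 ^ m := Nat.pow_le_pow_right (by norm_num) h
        have hk : 2 ^ k + 1 ≤ 2 ^ (k + 1) := by
          have : 2 ^ k < 2 ^ (k + 1) := Nat.pow_lt_pow_right (by norm_num) (Nat.lt_succ_self k)
          omega
        have hsplit : Finset.Icc 1 (2 ^ (k + 1)) =
            Finset.Icc 1 (2 ^ k) ∪ Finset.Icc (2 ^ k + 1) (2 ^ (k + 1)) := by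
          ext a
          simp only [Finset.mem_Icc, Finset.mem_union]
          omega
        have hdisj : Disjoint (Finset.Icc 1 (2 ^ k)) (Finset.Icc (2 ^ k + 1) (2 ^ (k + 1))) := by
          rw [Finset.disjoint_left]
          intro a ha hb
          simp only [Finset.mem_Icc] at ha hb
          omega
        rw [hsplit, Finset.sum_union hdisj]
        have h2 := hhalf (2 ^ (k + 1)) (by simp [hle, Nat.one_le_two_pow])
        have harith : 2 ^ (k + 1) - (2 ^ (k + 1) + 1) / 2 + 1 = 2 ^ k + 1 := by
          have : 2 ^ (k + 1) = 2 * 2 ^ k := by ring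
          omega
        rw [harith] at h2
        have := ih (Nat.le_of_succ_le h)
        push_cast
        linarith
  have hlog : Real.logb 2 ((2 : ℝ) ^ m) = m := by
    rw [Real.logb, Real.log_pow, mul_div_assoc, div_self (Real.log_ne_zero_of_pos_of_ne_one
      (by norm_num) (by norm_num)), mul_one]
  have hcast : ((2 ^ m : ℕ) : ℝ) = (2 : ℝ) ^ m := by push_cast; ring
  rw [hcast, hlog]
  exact key m le_rfl
end

section
/- Let T be a finite tree rooted at r and M a subset of its vertices with r ∈ M and |M| ≥ 2. If every leaf of T lies in M, then T can be decomposed into vertex-disjoint nontrivial spiders whose leaves are contained in M and such that every vertex of M is a leaf, root, or center of some spider in the decomposition. -/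
set_option linter.unusedSectionVars false

namespace SpiderAux
open SimpleGraph Walk

variable {V : Type*} [Fintype V] [DecidableEq V] {G : SimpleGraph V}

noncomputable def pth (hG : G.IsTree) (u w : V) : G.Walk u w :=
  (hG.existsUnique_path u w).choose

lemma pth_isPath (hG : G.IsTree) (u w : V) : (pth hG u w).IsPath :=
  (hG.existsUnique_path u w).choose_spec.1

lemma pth_unique (hG : G.IsTree) {u w : V} (q : G.Walk u w) (hq : q.IsPath) :
    q = pth hG u w :=
  (hG.existsUnique_path u w).choose_spec.2 q hq

lemma pth_self (hG : G.IsTree) (u : V) : pth hG u u = Walk.nil :=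
  (pth_unique hG Walk.nil IsPath.nil).symm

lemma takeUntil_pth (hG : G.IsTree) {u x w : V} (h : w ∈ (pth hG u x).support) :
    (pth hG u x).takeUntil w h = pth hG u w :=
  pth_unique hG _ ((pth_isPath hG u x).takeUntil h)

lemma dropUntil_pth (hG : G.IsTree) {u x w : V} (h : w ∈ (pth hG u x).support) :
    (pth hG u x).dropUntil w h = pth hG w x :=
  pth_unique hG _ ((pth_isPath hG u x).dropUntil h)

lemma pth_decomp (hG : G.IsTree) {u x w : V} (h : w ∈ (pth hG u x).support) :
    pth hG u x = (pth hG u w).append (pth hG w x) := by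
  conv_lhs => rw [← Walk.take_spec (pth hG u x) h]
  rw [takeUntil_pth hG h, dropUntil_pth hG h]

lemma pth_reverse (hG : G.IsTree) (u w : V) : (pth hG u w).reverse = pth hG w u :=
  pth_unique hG _ (pth_isPath hG u w).reverse

lemma support_pth_subset (hG : G.IsTree) {u x w : V} (h : w ∈ (pth hG u x).support) :
    ∀ y ∈ (pth hG u w).support, y ∈ (pth hG u x).support := by
  intro y hy
  rw [← takeUntil_pth hG h] at hy
  exact Walk.support_takeUntil_subset _ h hy

/-- if `x` lies on both halves of a path append, it is the midpoint. -/
lemma eq_mid_of_mem_mem {a b c x : V} {q1 : G.Walk a b} {q2 : G.Walk b c}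
    (h : (q1.append q2).IsPath) (h1 : x ∈ q1.support) (h2 : x ∈ q2.support) : x = b := by
  have hs := h.2
  rw [Walk.support_append] at hs
  rcases List.mem_cons.mp (by rw [Walk.support_eq_cons q2] at h2; exact h2) with h2' | h2'
  · exact h2'
  · exact absurd h1 (fun h1 => (List.disjoint_of_nodup_append hs) h1 h2')

lemma pth_length_lt (hG : G.IsTree) {u x w : V} (h : w ∈ (pth hG u x).support)
    (hne : w ≠ x) : (pth hG u w).length < (pth hG u x).length := by
  have := pth_decomp hG h
  have hlen : (pth hG u x).length = (pth hG u w).length + (pth hG w x).length := by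
    rw [this, Walk.length_append]
  have h0 : (pth hG w x).length ≠ 0 := by
    intro h0
    exact hne (Walk.eq_of_length_eq_zero h0)
  omega

/-- The set of vertices (weakly) below `v` in the tree rooted at `r`. -/
def below (hG : G.IsTree) (r v : V) : Set V := {u | v ∈ (pth hG r u).support}

lemma self_mem_below (hG : G.IsTree) (r v : V) : v ∈ below hG r v :=
  Walk.end_mem_support _

lemma mem_below_root (hG : G.IsTree) (r u : V) : u ∈ below hG r r :=
  Walk.start_mem_support _

lemma below_antisymm (hG : G.IsTree) {r v x : V}
    (h1 : v ∈ below hG r x) (h2 : x ∈ below hG r v) : x = v := by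
  -- h1 : x ∈ supp (pth r x) contains v ; h2 : v-path contains x
  by_contra hne
  have l1 := pth_length_lt hG h2 (fun h => hne h.symm)
  have l2 := pth_length_lt hG h1 hne
  omega

/-- every vertex on the path from `v` down to `u ∈ below v` is itself below `v`. -/
lemma mem_below_of_mem_leg (hG : G.IsTree) {r v u x : V} (hu : u ∈ below hG r v)
    (hx : x ∈ (pth hG v u).support) : x ∈ below hG r v := by
  have hdec := pth_decomp hG (show v ∈ (pth hG r u).support from hu)
  rcases eq_or_ne x v with rfl | hxv
  · exact self_mem_below hG r _
  -- build the path r → v → x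
  have hW : ((pth hG r v).append ((pth hG v u).takeUntil x hx)).IsPath := by
    apply IsPath.mk'
    rw [Walk.support_append, List.nodup_append]
    refine ⟨(pth_isPath hG r v).2, ((pth_isPath hG v u).takeUntil hx).2.tail, ?_⟩
    intro y hy1 b hy2 hyb
    subst hyb
    have hy2' : y ∈ ((pth hG v u).takeUntil x hx).support := List.mem_of_mem_tail hy2
    have hy3 : y ∈ (pth hG v u).support := Walk.support_takeUntil_subset _ hx hy2'
    have : y = v := eq_mid_of_mem_mem (hdec ▸ pth_isPath hG r u) hy1 hy3
    rw [this] at hy2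
    have hnd := ((pth_isPath hG v u).takeUntil hx).2
    rw [Walk.support_eq_cons] at hnd
    exact (List.nodup_cons.mp hnd).1 hy2
  have : (pth hG r v).append ((pth hG v u).takeUntil x hx) = pth hG r x :=
    pth_unique hG _ hW
  show v ∈ (pth hG r x).support
  rw [← this, Walk.support_append]
  exact List.mem_append_left _ (Walk.end_mem_support _)

/-- a vertex of `below v` lying on the leg `pth v u` witnesses `u ∈ below x`. -/
lemma leg_mem_below (hG : G.IsTree) {r v u x : V} (hu : u ∈ below hG r v)
    (hx : x ∈ (pth hG v u).support) : u ∈ below hG r x := by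
  show x ∈ (pth hG r u).support
  rw [pth_decomp hG (show v ∈ (pth hG r u).support from hu), Walk.support_append]
  rcases eq_or_ne x v with rfl | hxv
  · exact List.mem_append_left _ (Walk.end_mem_support _)
  · rw [Walk.support_eq_cons] at hx
    rcases List.mem_cons.mp hx with h | h
    · exact absurd h hxv
    · exact List.mem_append_right _ h

/-- strict ancestors of `v` are not below `v`. -/
lemma not_mem_below_of_ancestor (hG : G.IsTree) {r v x : V}
    (hx : x ∈ (pth hG r v).support) (hxv : x ≠ v) : x ∉ below hG r v := by
  intro hb
  exact hxv (below_antisymm hG hx hb)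

/-! ### neighbor sets in path subgraphs -/

lemma neighborSet_sup (H K : G.Subgraph) (x : V) :
    (H ⊔ K).neighborSet x = H.neighborSet x ∪ K.neighborSet x := by
  ext y; simp [Subgraph.neighborSet, Subgraph.sup_adj]

lemma nbr_start {a b : V} {q : G.Walk a b} (hq : q.IsPath) (hn : ¬ q.Nil) :
    q.toSubgraph.neighborSet a = {q.getVert 1} := by
  cases q with
  | nil => simp at hn
  | @cons _ u _ h q' =>
      ext y
      simp only [Walk.toSubgraph, Subgraph.neighborSet, Set.mem_setOf_eq,
        Subgraph.sup_adj, subgraphOfAdj_adj, Set.mem_singleton_iff,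
        Walk.getVert_cons_succ, Walk.getVert_zero]
      constructor
      · rintro (hadj | hadj)
        · rw [Sym2.eq_iff] at hadj
          rcases hadj with ⟨-, rfl⟩ | ⟨rfl, rfl⟩
          · rfl
          · exact absurd rfl h.ne
        · exfalso
          have : a ∈ q'.toSubgraph.verts := hadj.fst_mem
          rw [Walk.mem_verts_toSubgraph] at this
          exact ((Walk.cons_isPath_iff h q').mp hq).2 this
      · rintro rfl; left; rfl

lemma nbr_end {a b : V} {q : G.Walk a b} (hq : q.IsPath) (hn : ¬ q.Nil) :
    q.toSubgraph.neighborSet b = {q.reverse.getVert 1} := by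
  rw [← Walk.toSubgraph_reverse]
  exact nbr_start hq.reverse (by rwa [Walk.nil_iff_length_eq, Walk.length_reverse,
    ← Walk.nil_iff_length_eq])

lemma nbr_internal {a b x : V} {q : G.Walk a b} (hq : q.IsPath)
    (hx : x ∈ q.support) (hxa : x ≠ a) (hxb : x ≠ b) :
    ∃ y z : V, y ≠ z ∧ q.toSubgraph.neighborSet x = {y, z} := by
  have hdec := Walk.take_spec q hx
  set q1 := q.takeUntil x hx with hq1
  set q2 := q.dropUntil x hx with hq2
  have hq1p : q1.IsPath := hq.takeUntil hx
  have hq2p : q2.IsPath := hq.dropUntil hx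
  have hq1n : ¬ q1.Nil := Walk.not_nil_of_ne (fun h => hxa h.symm)
  have hq2n : ¬ q2.Nil := Walk.not_nil_of_ne hxb
  have hsub : q.toSubgraph = q1.toSubgraph ⊔ q2.toSubgraph := by
    conv_lhs => rw [← hdec]
    exact Walk.toSubgraph_append _ _
  refine ⟨q1.reverse.getVert 1, q2.getVert 1, ?_, ?_⟩
  · intro hyz
    have h1 : q1.toSubgraph.Adj x (q1.reverse.getVert 1) := by
      have := nbr_end hq1p hq1n
      have hm : q1.reverse.getVert 1 ∈ q1.toSubgraph.neighborSet x := by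
        rw [this]; rfl
      exact hm
    have h2 : q2.toSubgraph.Adj x (q2.getVert 1) := by
      have := nbr_start hq2p hq2n
      have hm : q2.getVert 1 ∈ q2.toSubgraph.neighborSet x := by rw [this]; rfl
      exact hm
    have hy1 : q1.reverse.getVert 1 ∈ q1.support := by
      have := h1.snd_mem; rwa [Walk.mem_verts_toSubgraph] at this
    have hy2 : q2.getVert 1 ∈ q2.support := by
      have := h2.snd_mem; rwa [Walk.mem_verts_toSubgraph] at this
    rw [hyz] at hy1
    have : q2.getVert 1 = x := eq_mid_of_mem_mem (hdec ▸ hq) hy1 hy2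
    exact h2.ne this.symm
  · rw [hsub, neighborSet_sup, nbr_end hq1p hq1n, nbr_start hq2p hq2n]
    exact Set.union_comm _ _ ▸ (Set.singleton_union ▸ (Set.union_singleton ▸ rfl))

/-! ### the spider construction -/

lemma spider (hG : G.IsTree) (v : V) (F : Set V) (M : Set V)
    (hne : F.Nonempty) (hvF : v ∉ F) (hFM : F ⊆ M) (hvM : F.ncard = 1 → v ∈ M)
    (hmeet : ∀ t ∈ F, ∀ t' ∈ F, t ≠ t' → ∀ x, x ∈ (pth hG v t).support →
      x ∈ (pth hG v t').support → x = v)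
    (hint : ∀ t ∈ F, ∀ x ∈ (pth hG v t).support, x ∈ M → x = v ∨ x ∈ F) :
    ∃ S : G.Subgraph,
      S.verts = {x | ∃ t ∈ F, x ∈ (pth hG v t).support} ∧
      S.Connected ∧ S.coe.IsAcyclic ∧
      (∀ u ∈ S.verts, 2 < (S.neighborSet u).ncard → u = v) ∧
      (∃ l₁ ∈ S.verts, ∃ l₂ ∈ S.verts, l₁ ≠ l₂ ∧
        (S.neighborSet l₁).ncard = 1 ∧ (S.neighborSet l₂).ncard = 1) ∧
      (∀ x ∈ S.verts, (S.neighborSet x).ncard = 1 → x ∈ M) ∧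
      (∀ m ∈ S.verts, m ∈ M → m = v ∨ (S.neighborSet m).ncard = 1) ∧
      v ∈ S.verts ∧ F ⊆ S.verts := by
  classical
  set S : G.Subgraph := ⨆ t : F, (pth hG v t.1).toSubgraph with hS
  have hverts : S.verts = {x | ∃ t ∈ F, x ∈ (pth hG v t).support} := by
    rw [hS, Subgraph.verts_iSup]
    ext x
    simp only [Set.mem_iUnion, Walk.mem_verts_toSubgraph, Set.mem_setOf_eq,
      Subtype.exists, exists_prop]
  have hnonnil : ∀ t ∈ F, ¬ (pth hG v t).Nil := by
    intro t ht
    exact Walk.not_nil_of_ne (fun h => hvF (h ▸ ht))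
  have hadj : ∀ x y, S.Adj x y ↔ ∃ t : F, ((pth hG v t.1).toSubgraph).Adj x y := by
    intro x y; rw [hS]; exact Subgraph.iSup_adj
  have huniq : ∀ {x t t'}, t ∈ F → t' ∈ F → x ≠ v → x ∈ (pth hG v t).support →
      x ∈ (pth hG v t').support → t = t' := by
    intro x t t' ht ht' hxv hxt hxt'
    by_contra hne'
    exact hxv (hmeet t ht t' ht' hne' x hxt hxt')
  have hnbr : ∀ t ∈ F, ∀ x, x ≠ v → x ∈ (pth hG v t).support →
      S.neighborSet x = (pth hG v t).toSubgraph.neighborSet x := by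
    intro t ht x hxv hxt
    ext y
    constructor
    · intro hy
      obtain ⟨⟨t', ht'⟩, hy'⟩ := (hadj x y).mp hy
      have hxt' : x ∈ (pth hG v t').support := by
        rw [← Walk.mem_verts_toSubgraph]; exact hy'.fst_mem
      obtain rfl := huniq ht' ht hxv hxt' hxt
      exact hy'
    · intro hy
      exact (hadj x y).mpr ⟨⟨t, ht⟩, hy⟩
  have htv : ∀ t ∈ F, t ≠ v := fun t ht h => hvF (h ▸ ht)
  have hdeg_t : ∀ t ∈ F, (S.neighborSet t).ncard = 1 := by
    intro t ht
    rw [hnbr t ht t (htv t ht) (Walk.end_mem_support _),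
      nbr_end (pth_isPath hG v t) (hnonnil t ht)]
    exact Set.ncard_singleton _
  have hdeg_int : ∀ t ∈ F, ∀ x ∈ (pth hG v t).support, x ≠ v → x ≠ t →
      (S.neighborSet x).ncard = 2 := by
    intro t ht x hxt hxv hxtne
    obtain ⟨y, z, hyz, hset⟩ := nbr_internal (pth_isPath hG v t) hxt hxv hxtne
    rw [hnbr t ht x hxv hxt, hset]
    exact Set.ncard_pair hyz
  have hv_nbr : S.neighborSet v = (fun t => (pth hG v t).getVert 1) '' F := by
    ext y
    constructor
    · intro hy
      obtain ⟨⟨t, ht⟩, hy'⟩ := (hadj v y).mp hy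
      have := nbr_start (pth_isPath hG v t) (hnonnil t ht)
      have hy'' : y ∈ (pth hG v t).toSubgraph.neighborSet v := hy'
      rw [this] at hy''
      exact ⟨t, ht, hy''.symm⟩
    · rintro ⟨t, ht, rfl⟩
      refine (hadj v _).mpr ⟨⟨t, ht⟩, ?_⟩
      have := nbr_start (pth_isPath hG v t) (hnonnil t ht)
      have hm : (pth hG v t).getVert 1 ∈ (pth hG v t).toSubgraph.neighborSet v := by
        rw [this]; rfl
      exact hm
  have hg1 : ∀ t ∈ F, (pth hG v t).getVert 1 ∈ (pth hG v t).support ∧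
      (pth hG v t).getVert 1 ≠ v := by
    intro t ht
    have h1 : (pth hG v t).toSubgraph.Adj v ((pth hG v t).getVert 1) := by
      have := nbr_start (pth_isPath hG v t) (hnonnil t ht)
      have hm : (pth hG v t).getVert 1 ∈ (pth hG v t).toSubgraph.neighborSet v := by
        rw [this]; rfl
      exact hm
    constructor
    · rw [← Walk.mem_verts_toSubgraph]; exact h1.snd_mem
    · exact fun h => h1.ne h.symm
  have hdeg_v : (S.neighborSet v).ncard = F.ncard := by
    rw [hv_nbr]
    apply Set.ncard_image_of_injOn
    intro t ht t' ht' heq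
    have heq' : (pth hG v t).getVert 1 = (pth hG v t').getVert 1 := heq
    obtain ⟨hm, hv1⟩ := hg1 t ht
    obtain ⟨hm', hv1'⟩ := hg1 t' ht'
    rw [heq'] at hm hv1
    exact huniq ht ht' hv1 hm hm'
  have hvmem : v ∈ S.verts := by
    obtain ⟨t0, ht0⟩ := hne
    rw [hverts]; exact ⟨t0, ht0, Walk.start_mem_support _⟩
  have hFsub : F ⊆ S.verts := by
    intro t ht
    rw [hverts]; exact ⟨t, ht, Walk.end_mem_support _⟩
  refine ⟨S, hverts, ?_, ?_, ?_, ?_, ?_, ?_, hvmem, hFsub⟩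
  · -- connected
    rw [SimpleGraph.Subgraph.connected_iff]
    refine ⟨Subgraph.Preconnected.mk ?_, ⟨v, hvmem⟩⟩
    have hreach : ∀ x (hx : x ∈ S.verts), S.coe.Reachable ⟨x, hx⟩ ⟨v, hvmem⟩ := by
      intro x hx
      have hx' := hx
      rw [hverts] at hx'
      obtain ⟨t, ht, hxt⟩ := hx'
      have hle : (pth hG v t).toSubgraph ≤ S := le_iSup (fun t : F => (pth hG v t.1).toSubgraph) ⟨t, ht⟩
      have hconn := (pth hG v t).toSubgraph_connected
      have hr := hconn.preconnected
        ⟨x, (Walk.mem_verts_toSubgraph _).mpr hxt⟩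
        ⟨v, (Walk.mem_verts_toSubgraph _).mpr (Walk.start_mem_support _)⟩
      exact hr.map (Subgraph.inclusion hle)
    intro x y
    exact (hreach x.1 x.2).trans (hreach y.1 y.2).symm
  · -- acyclic
    intro x c hc
    exact hG.IsAcyclic (c.map S.hom)
      ((Walk.map_isCycle_iff_of_injective Subgraph.hom_injective).mpr hc)
  · -- at most one vertex of degree > 2
    intro u hu hdeg
    by_contra huv
    rw [hverts] at hu
    obtain ⟨t, ht, hut⟩ := hu
    rcases eq_or_ne u t with rfl | hutne
    · rw [hdeg_t u ht] at hdeg; omega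
    · rw [hdeg_int t ht u hut huv hutne] at hdeg; omega
  · -- two leaves
    by_cases h2 : ∃ t ∈ F, ∃ t' ∈ F, t ≠ t'
    · obtain ⟨t, ht, t', ht', htt⟩ := h2
      exact ⟨t, hFsub ht, t', hFsub ht', htt, hdeg_t t ht, hdeg_t t' ht'⟩
    · obtain ⟨t0, ht0⟩ := hne
      push_neg at h2
      have hF1 : F = {t0} := by
        ext a
        constructor
        · intro ha; exact h2 a ha t0 ht0
        · rintro rfl; exact ht0
      refine ⟨v, hvmem, t0, hFsub ht0, (htv t0 ht0 ·.symm), ?_, hdeg_t t0 ht0⟩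
      rw [hdeg_v, hF1]
      exact Set.ncard_singleton _
  · -- leaves in M
    intro x hx hdeg
    rcases eq_or_ne x v with rfl | hxv
    · apply hvM; rw [← hdeg_v]; exact hdeg
    · rw [hverts] at hx
      obtain ⟨t, ht, hxt⟩ := hx
      rcases eq_or_ne x t with rfl | hxt'
      · exact hFM ht
      · rw [hdeg_int t ht x hxt hxv hxt'] at hdeg; omega
  · -- coverage of M
    intro m hm hmM
    rcases eq_or_ne m v with rfl | hmv
    · exact Or.inl rfl
    · rw [hverts] at hm
      obtain ⟨t, ht, hmt⟩ := hm
      rcases hint t ht m hmt hmM with h | h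
      · exact Or.inl h
      · exact Or.inr (hdeg_t m h)


/-- single-spider case of the main lemma -/
lemma single (hG : G.IsTree) (M s : Set V) (v : V) (F : Set V)
    (hne : F.Nonempty) (hvF : v ∉ F) (hFM : F ⊆ M) (hvM1 : F.ncard = 1 → v ∈ M)
    (hmeet : ∀ t ∈ F, ∀ t' ∈ F, t ≠ t' → ∀ x, x ∈ (pth hG v t).support →
      x ∈ (pth hG v t').support → x = v)
    (hint : ∀ t ∈ F, ∀ x ∈ (pth hG v t).support, x ∈ M → x = v ∨ x ∈ F)
    (hlegss : ∀ t ∈ F, ∀ x ∈ (pth hG v t).support, x ∈ s)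
    (hcovM : ∀ m ∈ M, m = v ∨ m ∈ F) :
    ∃ (d : ℕ) (X : Fin d → G.Subgraph) (root center : Fin d → V),
      (∀ j, (X j).Connected) ∧
      (∀ j, (X j).coe.IsAcyclic) ∧
      (∀ j, ∀ u ∈ (X j).verts, ∀ w ∈ (X j).verts,
        2 < ((X j).neighborSet u).ncard → 2 < ((X j).neighborSet w).ncard → u = w) ∧
      (∀ j, ∃ l₁ ∈ (X j).verts, ∃ l₂ ∈ (X j).verts, l₁ ≠ l₂ ∧
        ((X j).neighborSet l₁).ncard = 1 ∧ ((X j).neighborSet l₂).ncard = 1) ∧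
      (∀ i j, i ≠ j → Disjoint (X i).verts (X j).verts) ∧
      (∀ j, ∀ w ∈ (X j).verts, ((X j).neighborSet w).ncard = 1 → w ∈ M) ∧
      (∀ j, root j ∈ (X j).verts ∧ root j ∈ M ∧ center j ∈ (X j).verts) ∧
      (∀ m ∈ M, ∃ j, m = root j ∨ m = center j ∨
        (m ∈ (X j).verts ∧ ((X j).neighborSet m).ncard = 1)) ∧
      (∀ j, (X j).verts ⊆ s) := by
  obtain ⟨S0, hverts0, hconn0, hacyc0, hone0, hleaves0, hlvM0, hcov0, hv0, hFsub⟩ :=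
    spider hG v F M hne hvF hFM hvM1 hmeet hint
  obtain ⟨t0, ht0⟩ := hne
  refine ⟨1, fun _ => S0, fun _ => t0, fun _ => v, fun _ => hconn0, fun _ => hacyc0,
    ?_, fun _ => hleaves0, ?_, fun _ => hlvM0, fun _ => ⟨hFsub ht0, hFM ht0, hv0⟩, ?_, ?_⟩
  · intro j u hu w hw hu2 hw2
    rw [hone0 u hu hu2, hone0 w hw hw2]
  · intro i j hij
    exact absurd (Subsingleton.elim i j) hij
  · intro m hmM
    rcases hcovM m hmM with rfl | hmF
    · exact ⟨0, Or.inr (Or.inl rfl)⟩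
    · rcases hcov0 m (hFsub hmF) hmM with h | h
      · exact ⟨0, Or.inr (Or.inl h)⟩
      · exact ⟨0, Or.inr (Or.inr ⟨hFsub hmF, h⟩)⟩
  · intro j x hx
    rw [hverts0] at hx
    obtain ⟨t, ht, hxt⟩ := hx
    exact hlegss t ht x hxt

/-! ### main induction -/

lemma main (hG : G.IsTree) (r : V) :
    ∀ (n : ℕ) (M s : Set V), M.ncard ≤ n → 2 ≤ M.ncard → r ∈ M → M ⊆ s →
    (∀ u ∈ s, ∀ x ∈ (pth hG r u).support, x ∈ s) →
    ∃ (d : ℕ) (X : Fin d → G.Subgraph) (root center : Fin d → V),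
      (∀ j, (X j).Connected) ∧
      (∀ j, (X j).coe.IsAcyclic) ∧
      (∀ j, ∀ u ∈ (X j).verts, ∀ w ∈ (X j).verts,
        2 < ((X j).neighborSet u).ncard → 2 < ((X j).neighborSet w).ncard → u = w) ∧
      (∀ j, ∃ l₁ ∈ (X j).verts, ∃ l₂ ∈ (X j).verts, l₁ ≠ l₂ ∧
        ((X j).neighborSet l₁).ncard = 1 ∧ ((X j).neighborSet l₂).ncard = 1) ∧
      (∀ i j, i ≠ j → Disjoint (X i).verts (X j).verts) ∧
      (∀ j, ∀ w ∈ (X j).verts, ((X j).neighborSet w).ncard = 1 → w ∈ M) ∧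
      (∀ j, root j ∈ (X j).verts ∧ root j ∈ M ∧ center j ∈ (X j).verts) ∧
      (∀ m ∈ M, ∃ j, m = root j ∨ m = center j ∨
        (m ∈ (X j).verts ∧ ((X j).neighborSet m).ncard = 1)) ∧
      (∀ j, (X j).verts ⊆ s) := by
  intro n
  induction n with
  | zero => intro M s hMn hM2 _ _ _; omega
  | succ n ih =>
    intro M s hMn hM2 hrM hMs hscl
    classical
    -- choose a deepest vertex v with at least 2 elements of M below it
    set A : Set V := {w | 2 ≤ (M ∩ below hG r w).ncard} with hA
    have hrA : r ∈ A := by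
      have hMb : M ∩ below hG r r = M :=
        Set.inter_eq_self_of_subset_left (fun u _ => mem_below_root hG r u)
      show 2 ≤ (M ∩ below hG r r).ncard
      rw [hMb]; exact hM2
    obtain ⟨v, hvA, hvmax⟩ := Set.Finite.exists_maximalFor
      (fun u => (pth hG r u).length) A (Set.toFinite A) ⟨r, hrA⟩
    have hvA' : 2 ≤ (M ∩ below hG r v).ncard := hvA
    have hmax' : ∀ w, w ∈ below hG r v → w ≠ v → (M ∩ below hG r w).ncard ≤ 1 := by
      intro w hw hwv
      by_contra hcon
      push_neg at hcon
      have hwA : w ∈ A := by show 2 ≤ _; omega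
      have hlt : (pth hG r v).length < (pth hG r w).length :=
        pth_length_lt hG hw (fun h => hwv h.symm)
      have : (pth hG r w).length ≤ (pth hG r v).length := hvmax hwA (le_of_lt hlt)
      omega
    -- the targets strictly below v
    set F0 : Set V := (M ∩ below hG r v) \ {v} with hF0
    have hF0M : F0 ⊆ M := fun x hx => hx.1.1
    have hF0b : F0 ⊆ below hG r v := fun x hx => hx.1.2
    have hvF0 : v ∉ F0 := fun hx => hx.2 rfl
    have hins : M ∩ below hG r v ⊆ insert v F0 := by
      intro x hx
      rcases eq_or_ne x v with rfl | hxv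
      · exact Set.mem_insert _ _
      · exact Set.mem_insert_of_mem _ ⟨hx, hxv⟩
    have h1F0 : 1 ≤ F0.ncard := by
      have h1 := Set.ncard_le_ncard hins (Set.toFinite _)
      have h2 := Set.ncard_insert_le v F0
      omega
    have hF0ne : F0.Nonempty := Set.nonempty_of_ncard_ne_zero (by omega)
    have hvM1 : F0.ncard = 1 → v ∈ M := by
      intro h1
      by_contra hvM
      have hsub : M ∩ below hG r v ⊆ F0 := by
        intro x hx
        exact ⟨hx, fun h => hvM (h ▸ hx.1)⟩
      have := Set.ncard_le_ncard hsub (Set.toFinite _)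
      omega
    have hmeet0 : ∀ t ∈ F0, ∀ t' ∈ F0, t ≠ t' → ∀ x, x ∈ (pth hG v t).support →
        x ∈ (pth hG v t').support → x = v := by
      intro t ht t' ht' htt x hxt hxt'
      by_contra hxv
      have hxb : x ∈ below hG r v := mem_below_of_mem_leg hG (hF0b ht) hxt
      have htx : t ∈ below hG r x := leg_mem_below hG (hF0b ht) hxt
      have htx' : t' ∈ below hG r x := leg_mem_below hG (hF0b ht') hxt'
      have hpair : ({t, t'} : Set V) ⊆ M ∩ below hG r x := by
        rintro y (rfl | rfl)
        · exact ⟨hF0M ht, htx⟩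
        · exact ⟨hF0M ht', htx'⟩
      have h2 : 2 ≤ (M ∩ below hG r x).ncard := by
        have := Set.ncard_le_ncard hpair (Set.toFinite _)
        rw [Set.ncard_pair htt] at this
        exact this
      have := hmax' x hxb hxv
      omega
    have hint0 : ∀ t ∈ F0, ∀ x ∈ (pth hG v t).support, x ∈ M → x = v ∨ x ∈ F0 := by
      intro t ht x hxt hxM
      rcases eq_or_ne x v with rfl | hxv
      · exact Or.inl rfl
      · exact Or.inr ⟨⟨hxM, mem_below_of_mem_leg hG (hF0b ht) hxt⟩, hxv⟩
    have hvs : v ∈ s := by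
      obtain ⟨t0, ht0⟩ := hF0ne
      exact hscl t0 (hMs (hF0M ht0)) v (hF0b ht0)
    have hlegs_s : ∀ t ∈ F0, ∀ x ∈ (pth hG v t).support, x ∈ s := by
      intro t ht x hxt
      have : t ∈ below hG r x := leg_mem_below hG (hF0b ht) hxt
      exact hscl t (hMs (hF0M ht)) x this
    have hrb : r ∉ below hG r v ∨ v = r := by
      by_cases h : v = r
      · exact Or.inr h
      · left
        intro hb
        have : v ∈ (pth hG r r).support := hb
        rw [pth_self hG r] at this
        simp at this
        exact h this
    by_cases hcase : 2 ≤ (M \ below hG r v).ncard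
    · -- recurse on the rest of the tree
      have hvr : v ≠ r := by
        intro h
        have h0 : M \ below hG r v = ∅ :=
          Set.diff_eq_empty.mpr (fun x _ => by rw [h]; exact mem_below_root hG r x)
        rw [h0] at hcase
        simp at hcase
      obtain ⟨S0, hverts0, hconn0, hacyc0, hone0, hleaves0, hlvM0, hcov0, hv0, hF0sub⟩ :=
        spider hG v F0 M hF0ne hvF0 hF0M hvM1 hmeet0 hint0
      have hS0b : S0.verts ⊆ below hG r v := by
        rw [hverts0]
        rintro x ⟨t, ht, hxt⟩
        exact mem_below_of_mem_leg hG (hF0b ht) hxt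
      have hS0s : S0.verts ⊆ s := by
        rw [hverts0]
        rintro x ⟨t, ht, hxt⟩
        exact hlegs_s t ht x hxt
      have hrnb : r ∉ below hG r v := hrb.resolve_right hvr
      have hM'n : (M \ below hG r v).ncard ≤ n := by
        have := Set.ncard_inter_add_ncard_diff_eq_ncard M (below hG r v) (Set.toFinite M)
        omega
      have hscl' : ∀ u ∈ s \ below hG r v, ∀ x ∈ (pth hG r u).support,
          x ∈ s \ below hG r v := by
        rintro u ⟨hus, hub⟩ x hx
        refine ⟨hscl u hus x hx, fun hxb => hub ?_⟩
        exact support_pth_subset hG hx v hxb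
      obtain ⟨d, X, root, center, hconn, hacyc, hone, hleaves, hdisj, hlvM, hroot, hcov, hXs⟩ :=
        ih (M \ below hG r v) (s \ below hG r v) hM'n hcase ⟨hrM, hrnb⟩
          (fun x hx => ⟨hMs hx.1, hx.2⟩) hscl'
      obtain ⟨t0, ht0⟩ := hF0ne
      refine ⟨d + 1, Fin.cons S0 X, Fin.cons t0 root, Fin.cons v center,
        ?_, ?_, ?_, ?_, ?_, ?_, ?_, ?_, ?_⟩
      · intro j
        rcases Fin.eq_zero_or_eq_succ j with rfl | ⟨j', rfl⟩
        · simpa using hconn0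
        · simpa using hconn j'
      · intro j
        rcases Fin.eq_zero_or_eq_succ j with rfl | ⟨j', rfl⟩
        · exact hacyc0
        · exact hacyc j'
      · intro j
        rcases Fin.eq_zero_or_eq_succ j with rfl | ⟨j', rfl⟩
        · intro u hu w hw hu2 hw2
          simp only [Fin.cons_zero] at *
          rw [hone0 u hu hu2, hone0 w hw hw2]
        · intro u hu w hw hu2 hw2
          simp only [Fin.cons_succ] at *
          exact hone j' u hu w hw hu2 hw2
      · intro j
        rcases Fin.eq_zero_or_eq_succ j with rfl | ⟨j', rfl⟩
        · simpa using hleaves0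
        · simpa using hleaves j'
      · intro i j hij
        rcases Fin.eq_zero_or_eq_succ i with rfl | ⟨i', rfl⟩ <;>
          rcases Fin.eq_zero_or_eq_succ j with rfl | ⟨j', rfl⟩
        · exact absurd rfl hij
        · simp only [Fin.cons_zero, Fin.cons_succ]
          rw [Set.disjoint_left]
          intro x hx hx'
          exact (hXs j' hx').2 (hS0b hx)
        · simp only [Fin.cons_zero, Fin.cons_succ]
          rw [Set.disjoint_left]
          intro x hx hx'
          exact (hXs i' hx).2 (hS0b hx')
        · simp only [Fin.cons_succ]
          exact hdisj i' j' (fun h => hij (by rw [h]))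
      · intro j
        rcases Fin.eq_zero_or_eq_succ j with rfl | ⟨j', rfl⟩
        · simpa using hlvM0
        · simp only [Fin.cons_succ]
          intro w hw h1
          exact (hlvM j' w hw h1).1
      · intro j
        rcases Fin.eq_zero_or_eq_succ j with rfl | ⟨j', rfl⟩
        · simp only [Fin.cons_zero]
          exact ⟨hF0sub ht0, hF0M ht0, hv0⟩
        · simp only [Fin.cons_succ]
          exact ⟨(hroot j').1, (hroot j').2.1.1, (hroot j').2.2⟩
      · intro m hmM
        by_cases hmb : m ∈ below hG r v
        · rcases eq_or_ne m v with rfl | hmv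
          · exact ⟨0, Or.inr (Or.inl rfl)⟩
          · have hmF0 : m ∈ F0 := ⟨⟨hmM, hmb⟩, hmv⟩
            rcases hcov0 m (hF0sub hmF0) hmM with h | h
            · exact absurd h hmv
            · exact ⟨0, Or.inr (Or.inr ⟨hF0sub hmF0, h⟩)⟩
        · obtain ⟨j, hj⟩ := hcov m ⟨hmM, hmb⟩
          refine ⟨j.succ, ?_⟩
          simpa using hj
      · intro j
        rcases Fin.eq_zero_or_eq_succ j with rfl | ⟨j', rfl⟩
        · simpa using hS0s
        · simp only [Fin.cons_succ]
          exact fun x hx => (hXs j' hx).1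
    · -- a single spider suffices
      by_cases hvr : v = r
      · subst hvr
        refine single hG M s v F0 hF0ne hvF0 hF0M hvM1 hmeet0 hint0 hlegs_s ?_
        intro m hmM
        rcases eq_or_ne m v with rfl | hmr
        · exact Or.inl rfl
        · exact Or.inr ⟨⟨hmM, mem_below_root hG v m⟩, hmr⟩
      · have hrnb : r ∉ below hG r v := hrb.resolve_right hvr
        have hM' : M \ below hG r v = {r} := by
          apply Set.eq_singleton_iff_unique_mem.mpr
          refine ⟨⟨hrM, hrnb⟩, ?_⟩
          intro x hx
          have h1 : (M \ below hG r v).ncard ≤ 1 := by omega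
          exact (Set.ncard_le_one (Set.toFinite _)).mp h1 x hx r ⟨hrM, hrnb⟩
        set F : Set V := insert r F0 with hF
        have hrF0 : r ∉ F0 := fun h => hrnb (hF0b h)
        have hFne : F.Nonempty := ⟨r, Set.mem_insert _ _⟩
        have hvF : v ∉ F := by
          intro h
          rcases Set.mem_insert_iff.mp h with h | h
          · exact hvr h
          · exact hvF0 h
        have hFM : F ⊆ M := by
          intro x hx
          rcases Set.mem_insert_iff.mp hx with rfl | hx
          · exact hrM
          · exact hF0M hx
        have hF2 : 2 ≤ F.ncard := by
          obtain ⟨t0, ht0⟩ := hF0ne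
          have hsub : ({r, t0} : Set V) ⊆ F := by
            intro y hy
            rcases hy with rfl | hy
            · exact Set.mem_insert _ _
            · rw [Set.mem_singleton_iff] at hy
              exact Set.mem_insert_of_mem _ (hy ▸ ht0)
          have hle := Set.ncard_le_ncard hsub (Set.toFinite _)
          have hrt0 : r ≠ t0 := by rintro rfl; exact hrF0 ht0
          rw [Set.ncard_pair hrt0] at hle
          exact hle
        have hvM1' : F.ncard = 1 → v ∈ M := fun h => absurd h (by omega)
        have hrleg : ∀ x, x ∈ (pth hG v r).support ↔ x ∈ (pth hG r v).support := by
          intro x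
          rw [← pth_reverse hG r v, Walk.support_reverse, List.mem_reverse]
        have hmeetr : ∀ t' ∈ F0, ∀ x, x ∈ (pth hG v r).support →
            x ∈ (pth hG v t').support → x = v := by
          intro t' ht' x hxr hxt'
          by_contra hxv
          have hxb : x ∈ below hG r v := mem_below_of_mem_leg hG (hF0b ht') hxt'
          exact (not_mem_below_of_ancestor hG ((hrleg x).mp hxr) hxv) hxb
        have hmeet : ∀ t ∈ F, ∀ t' ∈ F, t ≠ t' → ∀ x, x ∈ (pth hG v t).support →
            x ∈ (pth hG v t').support → x = v := by
          intro t ht t' ht' htt x hxt hxt'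
          rcases Set.mem_insert_iff.mp ht with h1 | h1
          · rcases Set.mem_insert_iff.mp ht' with h2 | h2
            · exact absurd (h1.trans h2.symm) htt
            · exact hmeetr t' h2 x (h1 ▸ hxt) hxt'
          · rcases Set.mem_insert_iff.mp ht' with h2 | h2
            · exact hmeetr t h1 x (h2 ▸ hxt') hxt
            · exact hmeet0 t h1 t' h2 htt x hxt hxt'
        have hint : ∀ t ∈ F, ∀ x ∈ (pth hG v t).support, x ∈ M → x = v ∨ x ∈ F := by
          intro t ht x hxt hxM
          rcases eq_or_ne x v with rfl | hxv
          · exact Or.inl rfl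
          rcases Set.mem_insert_iff.mp ht with h1 | h1
          · have hxs : x ∈ (pth hG r v).support := (hrleg x).mp (h1 ▸ hxt)
            have hnb : x ∉ below hG r v := not_mem_below_of_ancestor hG hxs hxv
            have hx' : x ∈ M \ below hG r v := ⟨hxM, hnb⟩
            rw [hM'] at hx'
            exact Or.inr (Set.mem_insert_iff.mpr (Or.inl hx'))
          · rcases hint0 t h1 x hxt hxM with h | h
            · exact Or.inl h
            · exact Or.inr (Set.mem_insert_of_mem _ h)
        have hlegss : ∀ t ∈ F, ∀ x ∈ (pth hG v t).support, x ∈ s := by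
          intro t ht x hxt
          rcases Set.mem_insert_iff.mp ht with h1 | h1
          · exact hscl v hvs x ((hrleg x).mp (h1 ▸ hxt))
          · exact hlegs_s t h1 x hxt
        have hcovM : ∀ m ∈ M, m = v ∨ m ∈ F := by
          intro m hmM
          rcases eq_or_ne m v with rfl | hmv
          · exact Or.inl rfl
          by_cases hmb : m ∈ below hG r v
          · exact Or.inr (Set.mem_insert_of_mem _ ⟨⟨hmM, hmb⟩, hmv⟩)
          · have hx' : m ∈ M \ below hG r v := ⟨hmM, hmb⟩
            rw [hM'] at hx'
            exact Or.inr (Set.mem_insert_iff.mpr (Or.inl hx'))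
        exact single hG M s v F hFne hvF hFM hvM1' hmeet hint hlegss hcovM

end SpiderAux

/-- Spider decomposition.  `G` is a finite tree rooted at `r`, `M` a set of vertices
with `r ∈ M`, `|M| ≥ 2`, and every leaf of `G` (degree-1 vertex other than the root)
lies in `M`.  Then `G` decomposes into vertex-disjoint nontrivial spiders (subtrees
with at most one vertex of degree `> 2` and at least two leaves), each with a
designated root and center, whose leaves are contained in `M`, and such that every
vertex of `M` is a leaf, root, or center of some spider.  Degrees inside a subgraph
`H` are measured as `(H.neighborSet v).ncard`. -/
theorem stmt_11 {V : Type*} [Fintype V] [DecidableEq V]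
    (G : SimpleGraph V) [DecidableRel G.Adj] (hG : G.IsTree)
    (r : V) (M : Set V) (hr : r ∈ M) (hM : 2 ≤ M.ncard)
    (hleaf : ∀ v : V, v ≠ r → G.degree v = 1 → v ∈ M) :
    ∃ (d : ℕ) (X : Fin d → G.Subgraph) (root center : Fin d → V),
      (∀ j, (X j).Connected) ∧
      (∀ j, (X j).coe.IsAcyclic) ∧
      -- at most one vertex of degree > 2 (a spider)
      (∀ j, ∀ u ∈ (X j).verts, ∀ v ∈ (X j).verts,
        2 < ((X j).neighborSet u).ncard → 2 < ((X j).neighborSet v).ncard → u = v) ∧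
      -- nontrivial: at least two leaves
      (∀ j, ∃ l₁ ∈ (X j).verts, ∃ l₂ ∈ (X j).verts, l₁ ≠ l₂ ∧
        ((X j).neighborSet l₁).ncard = 1 ∧ ((X j).neighborSet l₂).ncard = 1) ∧
      -- pairwise vertex-disjoint
      (∀ i j, i ≠ j → Disjoint (X i).verts (X j).verts) ∧
      -- leaves of the spiders are contained in M
      (∀ j, ∀ v ∈ (X j).verts, ((X j).neighborSet v).ncard = 1 → v ∈ M) ∧
      (∀ j, root j ∈ (X j).verts ∧ root j ∈ M ∧ center j ∈ (X j).verts) ∧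
      -- every vertex of M is a leaf, root, or center of some spider
      (∀ m ∈ M, ∃ j, m = root j ∨ m = center j ∨
        (m ∈ (X j).verts ∧ ((X j).neighborSet m).ncard = 1)) := by
  obtain ⟨d, X, root, center, h1, h2, h3, h4, h5, h6, h7, h8, -⟩ :=
    SpiderAux.main hG r M.ncard M Set.univ le_rfl hM hr (fun _ _ => trivial)
      (fun _ _ _ _ => trivial)
  exact ⟨d, X, root, center, h1, h2, h3, h4, h5, h6, h7, h8⟩
end

section
/- Suppose a process maintains a positive integer count F, starting at F_1 = N ≥ 2 and ending at 1, where at step i the count decreases by h_i − 1 for some integer h_i ≥ 2, and the step incurs cost ΔC_i ≤ (h_i / F_i) · OPT. Then the total cost Σ_i ΔC_i is at most (H_{N} + H_{N-1}) · OPT ≤ (2 ln N + 2) · OPT. -/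
lemma harmonic_gap (a b : ℕ) (hb : 1 ≤ b) (hba : b ≤ a) :
    ((a : ℝ) - b) / a ≤ (harmonic a : ℝ) - (harmonic b : ℝ) := by
  have ha : 0 < (a : ℝ) := by exact_mod_cast Nat.lt_of_lt_of_le Nat.zero_lt_one (hb.trans hba)
  have key : (harmonic a : ℝ) - harmonic b = ∑ i ∈ Finset.Ico b a, ((i : ℝ) + 1)⁻¹ := by
    have : (harmonic a : ℝ) = ∑ i ∈ Finset.range a, ((i : ℝ) + 1)⁻¹ := by
      simp [harmonic]
    have hb' : (harmonic b : ℝ) = ∑ i ∈ Finset.range b, ((i : ℝ) + 1)⁻¹ := by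
      simp [harmonic]
    rw [this, hb', Finset.range_eq_Ico, Finset.range_eq_Ico,
      ← Finset.sum_Ico_consecutive _ (Nat.zero_le b) hba]
    ring
  rw [key]
  have : ((a : ℝ) - b) / a = ∑ _i ∈ Finset.Ico b a, (a : ℝ)⁻¹ := by
    rw [Finset.sum_const, Nat.card_Ico, nsmul_eq_mul, div_eq_mul_inv]
    rw [Nat.cast_sub hba]
  rw [this]
  apply Finset.sum_le_sum
  intro i hi
  have := (Finset.mem_Ico.mp hi).2
  apply inv_anti₀ (by positivity)
  have h2 : i + 1 ≤ a := this
  exact_mod_cast h2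

/-- The charging argument: a process maintains a positive count `F i`, starting at
`F 0 = N ≥ 2` and ending at `F I = 1`; at step `i` the count decreases by `h i - 1`
with `h i ≥ 2`, and the step incurs cost `ΔC i ≤ (h i / F i) · OPT`.  Then the total
cost is at most `(H_N + H_{N-1}) · OPT ≤ (2 ln N + 2) · OPT`, where `harmonic` is
Mathlib's harmonic number. -/
theorem stmt_14 (N : ℕ) (hN : 2 ≤ N) (OPT : ℝ) (hOPT : 0 ≤ OPT)
    (I : ℕ) (F : ℕ → ℕ) (h : ℕ → ℕ) (ΔC : ℕ → ℝ)
    (hF0 : F 0 = N) (hFI : F I = 1)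
    (hpos : ∀ i ≤ I, 1 ≤ F i)
    (hh : ∀ i < I, 2 ≤ h i)
    (hstep : ∀ i < I, (F (i + 1) : ℤ) = (F i : ℤ) - (h i : ℤ) + 1)
    (hcost : ∀ i < I, ΔC i ≤ ((h i : ℝ) / (F i : ℝ)) * OPT) :
    (∑ i ∈ Finset.range I, ΔC i) ≤
        ((harmonic N : ℝ) + (harmonic (N - 1) : ℝ)) * OPT ∧
      ((harmonic N : ℝ) + (harmonic (N - 1) : ℝ)) * OPT ≤
        (2 * Real.log N + 2) * OPT := by
  constructor
  · -- main bound
    have step1 : ∀ i < I, ΔC i ≤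
        (2 * ((harmonic (F i) : ℝ) - harmonic (F (i+1)))) * OPT := by
      intro i hi
      have hFi1 : 1 ≤ F (i+1) := hpos _ hi
      have hst := hstep i hi
      have hh2 := hh i hi
      have hle : F (i+1) ≤ F i := by omega
      have hFi : 2 ≤ F i := by omega
      have gap := harmonic_gap (F i) (F (i+1)) hFi1 hle
      refine (hcost i hi).trans ?_
      apply mul_le_mul_of_nonneg_right _ hOPT
      have hFpos : (0:ℝ) < F i := by positivity
      have hratio : ((h i : ℝ)) / F i ≤ 2 * (((F i : ℝ) - F (i+1)) / F i) := by
        rw [← mul_div_assoc, div_le_div_iff_of_pos_right hFpos]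
        have : (h i : ℤ) ≤ 2 * ((F i : ℤ) - F (i+1)) := by omega
        exact_mod_cast this
      refine hratio.trans ?_
      have : ((F i : ℝ) - F (i+1)) / F i ≤ (harmonic (F i) : ℝ) - harmonic (F (i+1)) := gap
      linarith
    have sum1 : (∑ i ∈ Finset.range I, ΔC i) ≤
        ∑ i ∈ Finset.range I, (2 * ((harmonic (F i) : ℝ) - harmonic (F (i+1)))) * OPT := by
      apply Finset.sum_le_sum
      intro i hi
      exact step1 i (Finset.mem_range.mp hi)
    have tele : ∑ i ∈ Finset.range I, (2 * ((harmonic (F i) : ℝ) - harmonic (F (i+1)))) * OPT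
        = 2 * ((harmonic N : ℝ) - harmonic 1) * OPT := by
      rw [← Finset.sum_mul, ← Finset.mul_sum,
        Finset.sum_range_sub' (fun i => (harmonic (F i) : ℝ)), hF0, hFI]
    refine sum1.trans ?_
    rw [tele]
    apply mul_le_mul_of_nonneg_right _ hOPT
    -- 2 * (H_N - 1) ≤ H_N + H_{N-1}
    have hNm : N - 1 + 1 = N := by omega
    have hsucc : (harmonic N : ℝ) = (harmonic (N-1) : ℝ) + ((N : ℝ))⁻¹ := by
      have h' := harmonic_succ (N-1)
      rw [hNm] at h'
      rw [h']
      push_cast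
      ring
    have h1 : (harmonic 1 : ℝ) = 1 := by norm_num [harmonic_succ, harmonic_zero]
    have hNinv : ((N : ℝ))⁻¹ ≤ 1 := by
      apply inv_le_one_of_one_le₀
      exact_mod_cast Nat.one_le_of_lt hN
    rw [h1]
    linarith [hsucc]
  · -- upper bound on harmonic numbers
    apply mul_le_mul_of_nonneg_right _ hOPT
    have h1 : (harmonic N : ℝ) ≤ 1 + Real.log N := harmonic_le_one_add_log N
    have h2 : (harmonic (N-1) : ℝ) ≤ 1 + Real.log (N-1 : ℕ) := harmonic_le_one_add_log (N-1)
    have h3 : Real.log (N-1 : ℕ) ≤ Real.log N := by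
      apply Real.log_le_log
      · have : 1 ≤ N - 1 := by omega
        exact_mod_cast Nat.lt_of_lt_of_le Nat.zero_lt_one this
      · exact_mod_cast Nat.sub_le N 1
    linarith
end
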